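/- For a connected cubic graph G on n vertices, the minimum size γ_C(G) of a connected dominating set satisfies γ_C(G) = n - 2 - φ(G), where φ(G) is the maximum number of full degree vertices in a spanning tree. -/

import Mathlib

open SimpleGraph

/-- Degree of `v` in `T` (as `Set.ncard` of the neighbor set). -/
noncomputable def deg {V : Type*} (T : SimpleGraph V) (v : V) : ℕ :=
  (T.neighborSet v).ncard

/-- `T` is a spanning tree of `G`. -/
def IsSpanningTree {V : Type*} (G T : SimpleGraph V) : Prop :=
  T ≤ G ∧ T.IsTree

/-- Number of full degree vertices of the spanning tree `T` of `G`. -/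
noncomputable def fullDegCount {V : Type*} (G T : SimpleGraph V) : ℕ :=
  {v : V | deg T v = deg G v}.ncard

/-- Number of leaves of `T`. -/
noncomputable def leafCount {V : Type*} (T : SimpleGraph V) : ℕ :=
  {v : V | deg T v = 1}.ncard

/-- `φ(G)`: maximum number of full degree vertices over all spanning trees. -/
noncomputable def phi {V : Type*} (G : SimpleGraph V) : ℕ :=
  sSup {k | ∃ T : SimpleGraph V, IsSpanningTree G T ∧ fullDegCount G T = k}

/-- `λ(G)`: maximum number of leaves over all spanning trees. -/
noncomputable def lam {V : Type*} (G : SimpleGraph V) : ℕ :=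
  sSup {k | ∃ T : SimpleGraph V, IsSpanningTree G T ∧ leafCount T = k}

/-- `S` is a connected dominating set of `G`. -/
def IsConnDomSet {V : Type*} (G : SimpleGraph V) (S : Set V) : Prop :=
  (G.induce S).Connected ∧ ∀ v : V, v ∈ S ∨ ∃ u ∈ S, G.Adj u v

/-- `γ_C(G)`: minimum size of a connected dominating set. -/
noncomputable def gammaC {V : Type*} (G : SimpleGraph V) : ℕ :=
  sInf {k | ∃ S : Set V, IsConnDomSet G S ∧ S.ncard = k}

/-- Closed neighborhood of `v` in `G`. -/
def closedNbhd {V : Type*} (G : SimpleGraph V) (v : V) : Set V :=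
  insert v (G.neighborSet v)

/-- The square of a graph: join vertices at distance at most 2. -/
def square {V : Type*} (G : SimpleGraph V) : SimpleGraph V where
  Adj u v := u ≠ v ∧ G.Reachable u v ∧ G.dist u v ≤ 2
  symm := by
    constructor
    rintro u v ⟨h1, h2, h3⟩
    exact ⟨h1.symm, h2.symm, by rwa [SimpleGraph.dist_comm]⟩
  loopless := by constructor; rintro v ⟨h, -⟩; exact h rfl

-- auxiliary lemmas (to be placed above stmt19)
section Aux
open SimpleGraph
variable {V : Type*}

lemma deg_eq_degree [Fintype V] (T : SimpleGraph V) [DecidableRel T.Adj] (v : V) :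
    deg T v = T.degree v := by
  rw [deg, SimpleGraph.degree, neighborFinset_def, Set.ncard_eq_toFinset_card']

lemma sum_deg [Fintype V] (T : SimpleGraph V) :
    ∑ v, deg T v = 2 * T.edgeSet.ncard := by
  classical
  simp_rw [deg_eq_degree]
  rw [← coe_edgeFinset, Set.ncard_coe_finset]
  exact T.sum_degrees_eq_twice_card_edges

lemma reach_del {G : SimpleGraph V} {u v : V}
    (hr : (G \ fromEdgeSet {s(u,v)}).Reachable u v) {a b : V} (p : G.Walk a b) :
    (G \ fromEdgeSet {s(u,v)}).Reachable a b := by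
  induction p with
  | nil => exact Reachable.refl _
  | @cons x y z hadj q ih =>
    by_cases he : s(x,y) = s(u,v)
    · rw [Sym2.eq_iff] at he
      rcases he with ⟨rfl, rfl⟩ | ⟨rfl, rfl⟩
      · exact hr.trans ih
      · exact hr.symm.trans ih
    · refine (Adj.reachable ?_).trans ih
      simp only [sdiff_adj, fromEdgeSet_adj]
      exact ⟨hadj, fun hc => he hc.1⟩

lemma connected_del {G : SimpleGraph V} (hG : G.Connected) {u v : V}
    (hr : (G \ fromEdgeSet {s(u,v)}).Reachable u v) :
    (G \ fromEdgeSet {s(u,v)}).Connected := by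
  rw [connected_iff] at hG ⊢
  exact ⟨fun a b => reach_del hr ((hG.1 a b).some), hG.2⟩

lemma exists_spanning_tree_aux [Fintype V] :
    ∀ (m : ℕ) (G : SimpleGraph V), G.edgeSet.ncard ≤ m → G.Connected → ∃ T ≤ G, T.IsTree := by
  intro m
  induction m with
  | zero =>
    intro G hcard hG
    refine ⟨G, le_refl _, hG, ?_⟩
    intro v c hc
    exfalso
    have h1 : c.edges ≠ [] := by
      intro h
      have := hc.three_le_length
      have := c.length_edges
      simp [h] at this
      omega
    obtain ⟨e, he⟩ := List.exists_mem_of_ne_nil _ h1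
    have : e ∈ G.edgeSet := c.edges_subset_edgeSet he
    have hne : G.edgeSet.Nonempty := ⟨e, this⟩
    have := hne.ncard_pos (G.edgeSet.toFinite)
    omega
  | succ m ih =>
    intro G hcard hG
    by_cases hac : G.IsAcyclic
    · exact ⟨G, le_refl _, hG, hac⟩
    · simp only [IsAcyclic, not_forall, not_not] at hac
      obtain ⟨v, c, hc⟩ := hac
      have h1 : c.edges ≠ [] := by
        intro h
        have := hc.three_le_length
        have := c.length_edges
        simp [h] at this
        omega
      obtain ⟨e, he⟩ := List.exists_mem_of_ne_nil _ h1
      have heE : e ∈ G.edgeSet := c.edges_subset_edgeSet he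
      induction e with
      | h x y =>
        rw [mem_edgeSet] at heE
        have hnb : ¬ G.IsBridge s(x,y) := by
          rw [isBridge_iff_adj_and_forall_cycle_notMem heE]
          push_neg
          exact ⟨v, c, hc, he⟩
        rw [isBridge_iff] at hnb
        push_neg at hnb
        have hr : (G \ fromEdgeSet {s(x,y)}).Reachable x y := hnb
        have hconn := connected_del hG hr
        have hle : G \ fromEdgeSet {s(x,y)} ≤ G := sdiff_le
        have hcard' : (G \ fromEdgeSet {s(x,y)}).edgeSet.ncard ≤ m := by
          have hsub : (G \ fromEdgeSet {s(x,y)}).edgeSet ⊆ G.edgeSet \ {s(x,y)} := by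
            rw [edgeSet_sdiff]
            intro f hf
            refine ⟨hf.1, ?_⟩
            intro hf2
            simp only [Set.mem_singleton_iff] at hf2
            subst hf2
            exact hf.2 (by rw [edgeSet_fromEdgeSet]; exact ⟨rfl, by simpa using heE.ne⟩)
          have h2 : (G.edgeSet \ {s(x,y)}).ncard < G.edgeSet.ncard := by
            apply Set.ncard_lt_ncard _ (G.edgeSet.toFinite)
            constructor
            · exact Set.diff_subset
            · intro hsub2
              have := hsub2 (show s(x,y) ∈ G.edgeSet from heE)
              simp at this
          have := Set.ncard_le_ncard hsub ((G.edgeSet \ {s(x,y)}).toFinite)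
          omega
        obtain ⟨T, hT1, hT2⟩ := ih _ hcard' hconn
        exact ⟨T, hT1.trans hle, hT2⟩

lemma exists_spanning_tree [Fintype V] (G : SimpleGraph V) (hG : G.Connected) :
    ∃ T ≤ G, T.IsTree :=
  exists_spanning_tree_aux G.edgeSet.ncard G (le_refl _) hG

lemma isTree_of_connected_card [Fintype V] (H : SimpleGraph V)
    (hconn : H.Connected) (hcard : H.edgeSet.ncard + 1 = Fintype.card V) : H.IsTree := by
  classical
  obtain ⟨T, hle, hT⟩ := exists_spanning_tree H hconn
  have h1 := hT.card_edgeFinset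
  have h2 : T.edgeSet.ncard + 1 = Fintype.card V := by
    rw [← coe_edgeFinset, Set.ncard_coe_finset]; exact h1
  have hsub : T.edgeSet ⊆ H.edgeSet := edgeSet_mono hle
  have heq : T.edgeSet = H.edgeSet :=
    Set.eq_of_subset_of_ncard_le hsub (by omega) (H.edgeSet.toFinite)
  rwa [edgeSet_inj.mp heq] at hT

lemma interior_two_nbrs {T : SimpleGraph V} {u w x : V} (p : T.Walk u w)
    (hp : p.IsPath) (hx : x ∈ p.support) (hxu : x ≠ u) (hxw : x ≠ w) :
    ∃ a b, a ≠ b ∧ T.Adj x a ∧ T.Adj x b := by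
  classical
  have hspec := p.take_spec hx
  set q := p.takeUntil x hx with hq
  set r := p.dropUntil x hx with hr
  obtain ⟨a, ha, q', heq⟩ := Walk.exists_eq_cons_of_ne hxu q.reverse
  obtain ⟨b, hb, r', her⟩ := Walk.exists_eq_cons_of_ne hxw r
  refine ⟨a, b, ?_, ha, hb⟩
  have hamem : a ∈ q.support := by
    have : a ∈ q.reverse.support := by
      rw [heq, Walk.support_cons]
      exact List.mem_cons_of_mem _ q'.start_mem_support
    rwa [Walk.support_reverse, List.mem_reverse] at this
  have hbmem : b ∈ r.support.tail := by
    rw [her, Walk.support_cons, List.tail_cons]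
    exact r'.start_mem_support
  have hnodup : p.support.Nodup := hp.2
  rw [← hspec, Walk.support_append] at hnodup
  have hdisj := List.disjoint_of_nodup_append hnodup
  exact fun hab => hdisj hamem (hab ▸ hbmem)

lemma leaf_endpoint {T : SimpleGraph V} {u w x : V} (p : T.Walk u w)
    (hp : p.IsPath) (hx : x ∈ p.support) (hdeg : deg T x = 1) : x = u ∨ x = w := by
  by_contra hc
  push_neg at hc
  obtain ⟨a, b, hab, ha, hb⟩ := interior_two_nbrs p hp hx hc.1 hc.2
  obtain ⟨c, hc'⟩ := Set.ncard_eq_one.mp hdeg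
  have h1 : a ∈ T.neighborSet x := ha
  have h2 : b ∈ T.neighborSet x := hb
  rw [hc'] at h1 h2
  exact hab (h1.trans h2.symm)

lemma leaf_nbr [Fintype V] {T : SimpleGraph V} (hT : T.IsTree)
    (h3 : 3 ≤ Fintype.card V) {v : V} (hv : deg T v = 1) :
    ∃ u, T.Adj u v ∧ deg T u ≠ 1 := by
  obtain ⟨u, hu⟩ := Set.ncard_eq_one.mp hv
  have huv : T.Adj v u := by
    have : u ∈ T.neighborSet v := hu ▸ rfl
    exact this
  refine ⟨u, huv.symm, ?_⟩
  intro hdu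
  obtain ⟨u', hu'⟩ := Set.ncard_eq_one.mp hdu
  have hvu' : v ∈ T.neighborSet u := huv.symm
  rw [hu'] at hvu'
  have hnu : T.neighborSet u = {v} := by rw [hu', hvu']
  classical
  have : ∃ w : V, w ≠ u ∧ w ≠ v := by
    by_contra hc
    push_neg at hc
    have hsub : (Finset.univ : Finset V) ⊆ {u, v} := by
      intro w _
      simp only [Finset.mem_insert, Finset.mem_singleton]
      by_cases h : w = u
      · exact Or.inl h
      · exact Or.inr (hc w h)
    have hle := Finset.card_le_card hsub
    have h2 : ({u, v} : Finset V).card ≤ 2 := (Finset.card_insert_le _ _).trans (by simp)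
    rw [Finset.card_univ] at hle
    omega
  obtain ⟨w, hwu, hwv⟩ := this
  let pp : T.Path w u := (hT.isConnected w u).some.toPath
  have hpath : pp.1.IsPath := pp.2
  have hvmem : v ∈ pp.1.support := by
    obtain ⟨a, ha, q', heq⟩ := Walk.exists_eq_cons_of_ne (Ne.symm hwu) pp.1.reverse
    have hav : a = v := by
      have : a ∈ T.neighborSet u := ha
      rwa [hnu] at this
    have : v ∈ pp.1.reverse.support := by
      rw [heq, Walk.support_cons]
      exact List.mem_cons_of_mem _ (hav ▸ q'.start_mem_support)
    rwa [Walk.support_reverse, List.mem_reverse] at this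
  rcases leaf_endpoint pp.1 hpath hvmem hv with h | h
  · exact hwv h.symm
  · exact huv.ne' (h ▸ rfl)

lemma reach_induce {H : SimpleGraph V} {S : Set V} {a b : V} (p : H.Walk a b)
    (hsup : ∀ x ∈ p.support, x ∈ S) (ha : a ∈ S) (hb : b ∈ S) :
    (H.induce S).Reachable ⟨a, ha⟩ ⟨b, hb⟩ := by
  induction p with
  | nil => exact Reachable.refl _
  | @cons x y z hadj q ih =>
    have hy : y ∈ S := hsup y (by rw [Walk.support_cons]; exact List.mem_cons_of_mem _ q.start_mem_support)
    have h1 : (H.induce S).Adj ⟨x, ha⟩ ⟨y, hy⟩ := hadj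
    exact (h1.reachable).trans (ih (fun c hc => hsup c (by rw [Walk.support_cons]; exact List.mem_cons_of_mem _ hc)) hy hb)

lemma cds_internal [Fintype V] {G T : SimpleGraph V} (hST : IsSpanningTree G T)
    (h3 : 3 ≤ Fintype.card V) :
    IsConnDomSet G {v | deg T v ≠ 1} ∧
      ({v : V | deg T v ≠ 1}).ncard = Fintype.card V - leafCount T := by
  obtain ⟨hle, hT⟩ := hST
  set S : Set V := {v | deg T v ≠ 1} with hS
  have hdom : ∀ v : V, v ∈ S ∨ ∃ u ∈ S, G.Adj u v := by
    intro v
    by_cases hv : deg T v = 1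
    · obtain ⟨u, hu1, hu2⟩ := leaf_nbr hT h3 hv
      exact Or.inr ⟨u, hu2, hle hu1⟩
    · exact Or.inl hv
  have hSne : S.Nonempty := by
    have : Nonempty V := Fintype.card_pos_iff.mp (by omega)
    obtain ⟨v⟩ := this
    by_cases hv : deg T v = 1
    · obtain ⟨u, _, hu2⟩ := leaf_nbr hT h3 hv
      exact ⟨u, hu2⟩
    · exact ⟨v, hv⟩
  have hconn : (G.induce S).Connected := by
    rw [connected_iff]
    refine ⟨?_, ⟨⟨hSne.choose, hSne.choose_spec⟩⟩⟩
    rintro ⟨a, ha⟩ ⟨b, hb⟩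
    classical
    let p : T.Path a b := (hT.isConnected a b).some.toPath
    have hsup : ∀ x ∈ p.1.support, x ∈ S := by
      intro x hx
      by_cases hdx : deg T x = 1
      · rcases leaf_endpoint p.1 p.2 hx hdx with rfl | rfl
        · exact ha
        · exact hb
      · exact hdx
    have := reach_induce p.1 hsup (hsup a p.1.start_mem_support) (hsup b p.1.end_mem_support)
    have hmono : T.induce S ≤ G.induce S := fun x y h => hle h
    exact (Reachable.mono hmono (by convert this))
  refine ⟨⟨hconn, hdom⟩, ?_⟩
  have hcompl : S = {v : V | deg T v = 1}ᶜ := by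
    ext v; simp [hS]
  rw [hcompl]
  have := Set.ncard_add_ncard_compl {v : V | deg T v = 1}
  rw [Nat.card_eq_fintype_card] at this
  rw [leafCount] at *
  omega

end Aux
section Aux2
open SimpleGraph
variable {V : Type*}

lemma cds_to_tree [Fintype V] {G : SimpleGraph V} {S : Set V}
    (hCDS : IsConnDomSet G S) :
    ∃ T, IsSpanningTree G T ∧ Fintype.card V - S.ncard ≤ leafCount T := by
  classical
  obtain ⟨hconn, hdom⟩ := hCDS
  haveI : Nonempty ↥S := hconn.nonempty
  haveI : Nonempty V := ⟨(Classical.arbitrary ↥S).1⟩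
  have hf' : ∀ v : V, ∃ u : V, v ∉ S → (u ∈ S ∧ G.Adj u v) := by
    intro v
    rcases hdom v with hv | ⟨u, hu1, hu2⟩
    · exact ⟨Classical.arbitrary V, fun h => absurd hv h⟩
    · exact ⟨u, fun _ => ⟨hu1, hu2⟩⟩
  choose f hf using hf'
  obtain ⟨T₀, hT₀le, hT₀⟩ := exists_spanning_tree (G.induce S) hconn
  set T : SimpleGraph V := fromRel (fun a b =>
    (∃ (ha : a ∈ S) (hb : b ∈ S), T₀.Adj ⟨a, ha⟩ ⟨b, hb⟩) ∨ (a ∉ S ∧ b = f a)) with hTdef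
  have hTle : T ≤ G := by
    intro a b hab
    rw [hTdef, fromRel_adj] at hab
    obtain ⟨hne, h | h⟩ := hab
    · rcases h with ⟨ha, hb, hadj⟩ | ⟨haS, rfl⟩
      · exact hT₀le hadj
      · exact ((hf a haS).2).symm
    · rcases h with ⟨hb, ha, hadj⟩ | ⟨hbS, rfl⟩
      · exact (hT₀le hadj).symm
      · exact (hf b hbS).2
  have hadjf : ∀ v : V, v ∉ S → T.Adj v (f v) := by
    intro v hv
    rw [hTdef, fromRel_adj]
    refine ⟨?_, Or.inl (Or.inr ⟨hv, rfl⟩)⟩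
    intro h
    exact hv (h ▸ (hf v hv).1)
  have hadjT₀ : ∀ p q : ↥S, T₀.Adj p q → T.Adj ↑p ↑q := by
    intro p q hpq
    rw [hTdef, fromRel_adj]
    refine ⟨fun h => hpq.ne (Subtype.ext h), Or.inl (Or.inl ⟨p.2, q.2, ?_⟩)⟩
    simpa using hpq
  have hnb : ∀ v : V, v ∉ S → T.neighborSet v = {f v} := by
    intro v hv
    ext u
    simp only [mem_neighborSet, Set.mem_singleton_iff]
    constructor
    · intro h
      rw [hTdef, fromRel_adj] at h
      obtain ⟨hne, h | h⟩ := h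
      · rcases h with ⟨ha, _, _⟩ | ⟨_, rfl⟩
        · exact absurd ha hv
        · rfl
      · rcases h with ⟨_, ha, _⟩ | ⟨huS, rfl⟩
        · exact absurd ha hv
        · exact absurd (hf u huS).1 hv
    · rintro rfl
      exact hadjf v hv
  have hTconn : T.Connected := by
    rw [connected_iff]
    refine ⟨?_, inferInstance⟩
    have hS : ∀ x y : ↥S, T.Reachable ↑x ↑y := by
      intro x y
      have := hT₀.isConnected x y
      exact this.map ⟨Subtype.val, fun h => hadjT₀ _ _ h⟩
    have hto : ∀ a : V, ∃ s : ↥S, T.Reachable a ↑s := by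
      intro a
      by_cases ha : a ∈ S
      · exact ⟨⟨a, ha⟩, Reachable.refl _⟩
      · exact ⟨⟨f a, (hf a ha).1⟩, (hadjf a ha).reachable⟩
    intro a b
    obtain ⟨s, hs⟩ := hto a
    obtain ⟨t, ht⟩ := hto b
    exact hs.trans ((hS s t).trans ht.symm)
  set E1 : Set (Sym2 V) := Sym2.map (Subtype.val) '' T₀.edgeSet with hE1
  set E2 : Set (Sym2 V) := (fun v => s(v, f v)) '' Sᶜ with hE2
  have hEdge : T.edgeSet = E1 ∪ E2 := by
    apply Set.Subset.antisymm
    · intro e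
      refine Sym2.ind (fun a b h => ?_) e
      rw [mem_edgeSet] at h
      rw [hTdef, fromRel_adj] at h
      simp only [Set.mem_union]
      obtain ⟨hne, h | h⟩ := h
      · rcases h with ⟨ha, hb, hadj⟩ | ⟨haS, rfl⟩
        · exact Or.inl ⟨s(⟨a, ha⟩, ⟨b, hb⟩), hadj, by simp [Sym2.map_pair_eq]⟩
        · exact Or.inr ⟨a, haS, rfl⟩
      · rcases h with ⟨hb, ha, hadj⟩ | ⟨hbS, rfl⟩
        · exact Or.inl ⟨s(⟨b, hb⟩, ⟨a, ha⟩), hadj, by simp [Sym2.map_pair_eq, Sym2.eq_swap]⟩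
        · exact Or.inr ⟨b, hbS, Sym2.eq_swap⟩
    · apply Set.union_subset
      · rintro e ⟨e₀, he₀, rfl⟩
        revert he₀
        refine Sym2.ind (fun x y he₀ => ?_) e₀
        rw [mem_edgeSet] at he₀
        rw [Sym2.map_pair_eq, mem_edgeSet]
        exact hadjT₀ x y he₀
      · rintro e ⟨v, hv, rfl⟩
        rw [mem_edgeSet]
        exact hadjf v hv
  have hdisj : Disjoint E1 E2 := by
    rw [Set.disjoint_left]
    rintro e ⟨e₀, he₀, rfl⟩ ⟨v, hv, hveq⟩
    have hvmem : v ∈ Sym2.map (Subtype.val) e₀ :=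
      hveq ▸ Sym2.mem_mk_left v (f v)
    rw [Sym2.mem_map] at hvmem
    obtain ⟨w, _, hw⟩ := hvmem
    exact hv (hw ▸ w.2)
  have hE1card : E1.ncard = T₀.edgeSet.ncard :=
    Set.ncard_image_of_injective _ (Sym2.map.injective Subtype.val_injective)
  have hE2card : E2.ncard = Sᶜ.ncard := by
    apply Set.ncard_image_of_injOn
    intro v hv w hw hvw
    simp only at hvw
    rw [Sym2.eq_iff] at hvw
    rcases hvw with ⟨h, _⟩ | ⟨h1, h2⟩
    · exact h
    · exact absurd ((h1 ▸ (hf w hw).1 : v ∈ S)) hv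
  haveI : Fintype ↥S := Fintype.ofFinite ↥S
  have hScard : S.ncard = Fintype.card ↥S := by
    rw [← Nat.card_coe_set_eq, Nat.card_eq_fintype_card]
  have hSpos : 1 ≤ S.ncard := by
    rw [hScard]
    exact Fintype.card_pos
  have hSle : S.ncard ≤ Fintype.card V := by
    have := Set.ncard_le_ncard (Set.subset_univ S) (Set.finite_univ)
    rwa [Set.ncard_univ, Nat.card_eq_fintype_card] at this
  have hT₀card : T₀.edgeSet.ncard + 1 = S.ncard := by
    haveI : Fintype T₀.edgeSet := Fintype.ofFinite _
    have := hT₀.card_edgeFinset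
    rw [← coe_edgeFinset, Set.ncard_coe_finset, hScard]
    exact this
  have hcompl : Sᶜ.ncard = Fintype.card V - S.ncard := by
    have := Set.ncard_add_ncard_compl S
    rw [Nat.card_eq_fintype_card] at this
    omega
  have hTcard : T.edgeSet.ncard + 1 = Fintype.card V := by
    rw [hEdge, Set.ncard_union_eq hdisj (Set.toFinite E1) (Set.toFinite E2), hE1card, hE2card,
      hcompl]
    omega
  have hTtree : T.IsTree := isTree_of_connected_card T hTconn hTcard
  refine ⟨T, ⟨hTle, hTtree⟩, ?_⟩
  have hsub : Sᶜ ⊆ {v : V | deg T v = 1} := by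
    intro v hv
    simp only [Set.mem_setOf_eq, deg]
    rw [hnb v hv]
    exact Set.ncard_singleton _
  have := Set.ncard_le_ncard hsub (Set.toFinite _)
  rw [hcompl] at this
  exact this

lemma deg_pos [Fintype V] {T : SimpleGraph V} (hT : T.Connected)
    (h2 : 2 ≤ Fintype.card V) (v : V) : 1 ≤ deg T v := by
  obtain ⟨w, hw⟩ := Fintype.exists_ne_of_one_lt_card (by omega) v
  obtain ⟨p⟩ := hT v w
  obtain ⟨a, ha, -, -⟩ := Walk.exists_eq_cons_of_ne (Ne.symm hw) p
  have : (T.neighborSet v).Nonempty := ⟨a, ha⟩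
  exact (Set.ncard_pos (Set.toFinite _)).mpr this

lemma deg_mono [Fintype V] {T G : SimpleGraph V} (h : T ≤ G) (v : V) :
    deg T v ≤ deg G v :=
  Set.ncard_le_ncard (fun _ ha => h ha) (Set.toFinite _)

lemma leaf_count_eq [Fintype V] {G T : SimpleGraph V} (hST : IsSpanningTree G T)
    (h2 : 2 ≤ Fintype.card V) (hreg : ∀ v, deg G v = 3) :
    leafCount T = fullDegCount G T + 2 := by
  classical
  obtain ⟨hle, hT⟩ := hST
  have hbd : ∀ v : V, 1 ≤ deg T v ∧ deg T v ≤ 3 := fun v =>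
    ⟨deg_pos hT.isConnected h2 v, (deg_mono hle v).trans (le_of_eq (hreg v))⟩
  set A := Finset.univ.filter (fun v : V => deg T v = 1) with hA
  set B := Finset.univ.filter (fun v : V => deg T v = 2) with hB
  set C := Finset.univ.filter (fun v : V => deg T v = 3) with hC
  have hLA : leafCount T = A.card := by
    rw [leafCount, Set.ncard_eq_toFinset_card', Set.toFinset_setOf]
  have hFC : fullDegCount G T = C.card := by
    rw [fullDegCount]
    have : {v : V | deg T v = deg G v} = {v : V | deg T v = 3} := by
      ext v; simp [hreg v]
    rw [this, Set.ncard_eq_toFinset_card', Set.toFinset_setOf]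
  have hsum : ∑ v, deg T v = 2 * (Fintype.card V - 1) := by
    rw [sum_deg]
    haveI : Fintype T.edgeSet := Fintype.ofFinite _
    have := hT.card_edgeFinset
    rw [← coe_edgeFinset, Set.ncard_coe_finset]
    omega
  have hsplit1 := Finset.sum_filter_add_sum_filter_not Finset.univ (fun v : V => deg T v = 1)
    (fun v => deg T v)
  have hsplit2 := Finset.sum_filter_add_sum_filter_not
    (Finset.univ.filter (fun v : V => ¬ deg T v = 1)) (fun v : V => deg T v = 2)
    (fun v => deg T v)
  have hBeq : (Finset.univ.filter (fun v : V => ¬ deg T v = 1)).filter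
      (fun v : V => deg T v = 2) = B := by
    ext v
    simp only [Finset.mem_filter, Finset.mem_univ, true_and, hB]
    constructor
    · exact fun h => h.2
    · intro h; omega
  have hCeq : (Finset.univ.filter (fun v : V => ¬ deg T v = 1)).filter
      (fun v : V => ¬ deg T v = 2) = C := by
    ext v
    have := hbd v
    simp only [Finset.mem_filter, Finset.mem_univ, true_and, hC]
    omega
  have hAsum : ∑ v ∈ A, deg T v = A.card := by
    rw [Finset.sum_congr rfl (fun v hv => (Finset.mem_filter.mp hv).2)]
    simp [hA]
  have hBsum : ∑ v ∈ B, deg T v = 2 * B.card := by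
    rw [Finset.sum_congr rfl (fun v hv => (Finset.mem_filter.mp hv).2)]
    simp [mul_comm, hB]
  have hCsum : ∑ v ∈ C, deg T v = 3 * C.card := by
    rw [Finset.sum_congr rfl (fun v hv => (Finset.mem_filter.mp hv).2)]
    simp [mul_comm, hC]
  rw [hBeq, hCeq] at hsplit2
  rw [← hsplit2, hAsum, hBsum, hCsum] at hsplit1
  have hcard1 := Finset.card_filter_add_card_filter_not (s := Finset.univ)
    (p := fun v : V => deg T v = 1)
  have hcard2 := Finset.card_filter_add_card_filter_not
    (s := Finset.univ.filter (fun v : V => ¬ deg T v = 1)) (p := fun v : V => deg T v = 2)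
  rw [hBeq, hCeq] at hcard2
  rw [Finset.card_univ] at hcard1
  rw [hsum] at hsplit1
  rw [hLA, hFC]
  rw [← hA] at hcard1
  omega

end Aux2
section Main
open SimpleGraph

lemma ncard_le_card {V : Type*} [Fintype V] (s : Set V) : s.ncard ≤ Fintype.card V := by
  have := Set.ncard_le_ncard (Set.subset_univ s) Set.finite_univ
  rwa [Set.ncard_univ, Nat.card_eq_fintype_card] at this

theorem stmt19 {V : Type*} [Fintype V] (G : SimpleGraph V) (n : ℕ)
    (hn : n = Fintype.card V) (hn4 : 4 ≤ n) (hG : G.Connected)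
    (hreg : ∀ v : V, deg G v = 3) :
    gammaC G = n - 2 - phi G := by
  classical
  have h3 : 3 ≤ Fintype.card V := by omega
  have h2 : 2 ≤ Fintype.card V := by omega
  set Sl : Set ℕ := {k | ∃ T : SimpleGraph V, IsSpanningTree G T ∧ leafCount T = k} with hSl
  set Sp : Set ℕ := {k | ∃ T : SimpleGraph V, IsSpanningTree G T ∧ fullDegCount G T = k} with hSp
  obtain ⟨T0, hT0le, hT0⟩ := exists_spanning_tree G hG
  have hnel : Sl.Nonempty := ⟨leafCount T0, T0, ⟨hT0le, hT0⟩, rfl⟩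
  have hnep : Sp.Nonempty := ⟨fullDegCount G T0, T0, ⟨hT0le, hT0⟩, rfl⟩
  have hbddl : BddAbove Sl := by
    refine ⟨Fintype.card V, ?_⟩
    rintro k ⟨T, -, rfl⟩
    exact ncard_le_card _
  have hbddp : BddAbove Sp := by
    refine ⟨Fintype.card V, ?_⟩
    rintro k ⟨T, -, rfl⟩
    exact ncard_le_card _
  have hlam_mem : lam G ∈ Sl := Nat.sSup_mem hnel hbddl
  obtain ⟨Tm, hTm, hTmleaf⟩ := hlam_mem
  -- gammaC ≤ n - lam
  obtain ⟨hcds, hcount⟩ := cds_internal hTm h3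
  have h6 : gammaC G ≤ Fintype.card V - lam G := by
    apply Nat.sInf_le
    exact ⟨_, hcds, by rw [hcount, hTmleaf]⟩
  -- gammaC is attained
  have hγne : {k | ∃ S : Set V, IsConnDomSet G S ∧ S.ncard = k}.Nonempty := by
    refine ⟨(Set.univ : Set V).ncard, Set.univ, ⟨?_, fun v => Or.inl trivial⟩, rfl⟩
    rw [connected_iff]
    haveI : Nonempty V := hG.nonempty
    refine ⟨?_, ⟨⟨Classical.arbitrary V, trivial⟩⟩⟩
    rintro ⟨a, -⟩ ⟨b, -⟩
    have := hG a b
    exact this.map (⟨fun v => ⟨v, trivial⟩, fun {x y} h => h⟩ : G →g G.induce Set.univ)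
  have hγ_mem := Nat.sInf_mem hγne
  obtain ⟨Sm, hSm, hSmcard⟩ := hγ_mem
  obtain ⟨T', hT', hT'leaf⟩ := cds_to_tree hSm
  have h7 : Fintype.card V - gammaC G ≤ lam G := by
    have h1 : Fintype.card V - gammaC G ≤ leafCount T' := by
      rw [show gammaC G = Sm.ncard from hSmcard.symm]
      exact hT'leaf
    exact h1.trans (le_csSup hbddl ⟨T', hT', rfl⟩)
  -- lam = phi + 2
  have h8a : lam G ≤ phi G + 2 := by
    rw [← hTmleaf, leaf_count_eq hTm h2 hreg]
    have : fullDegCount G Tm ≤ phi G := le_csSup hbddp ⟨Tm, hTm, rfl⟩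
    omega
  have hphi_mem : phi G ∈ Sp := Nat.sSup_mem hnep hbddp
  obtain ⟨Tp, hTp, hTpfull⟩ := hphi_mem
  have h8b : phi G + 2 ≤ lam G := by
    have h1 : leafCount Tp = phi G + 2 := by
      rw [leaf_count_eq hTp h2 hreg, hTpfull]
    have h2' : leafCount Tp ≤ lam G := le_csSup hbddl ⟨Tp, hTp, rfl⟩
    omega
  have hlamle : lam G ≤ Fintype.card V := by
    rw [← hTmleaf]; exact ncard_le_card _
  omega

end Main
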